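/- Let N be a phylogenetic network that is both edgebased and H-connected (i.e., the graph obtained from N by deleting all leaves and their incident edges is Hamilton-connected). Then the leaf-cut graph LCUT(N) has fewer than four vertices. -/

import Mathlib

/-- A finite multigraph (loops and parallel edges allowed) on vertex type `V`. -/
structure MGraph (V : Type) [DecidableEq V] where
  verts : Finset V
  edges : Multiset (Sym2 V)

namespace MGraph

variable {V : Type} [DecidableEq V]

/-- All endpoints of edges are vertices. -/
def Good (G : MGraph V) : Prop := ∀ e ∈ G.edges, ∀ v ∈ e, v ∈ G.verts

/-- Degree of a vertex: loops count twice. -/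
def degree (G : MGraph V) (v : V) : ℕ :=
  (G.edges.map fun e => if e = s(v, v) then 2 else if v ∈ e then 1 else 0).sum

def Adj (G : MGraph V) (u v : V) : Prop := s(u, v) ∈ G.edges

def ConnectedM (G : MGraph V) : Prop :=
  G.verts.Nonempty ∧ ∀ u ∈ G.verts, ∀ v ∈ G.verts, Relation.ReflTransGen G.Adj u v

/-- The restriction operations of Algorithm 1: delete a leaf, suppress a degree-2
vertex (both only allowed while more than 2 vertices remain), delete one copy of a
parallel (non-loop) edge, delete a loop. -/
inductive Step : MGraph V → MGraph V → Prop
  | deleteLeaf (G : MGraph V) (v : V) (e : Sym2 V) :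
      2 < G.verts.card → v ∈ G.verts → G.degree v = 1 → e ∈ G.edges → v ∈ e →
      Step G ⟨G.verts.erase v, G.edges.erase e⟩
  | suppress (G : MGraph V) (v u w : V) (rest : Multiset (Sym2 V)) :
      2 < G.verts.card → v ∈ G.verts → G.degree v = 2 → u ≠ v → w ≠ v →
      G.edges = s(u, v) ::ₘ s(v, w) ::ₘ rest →
      Step G ⟨G.verts.erase v, s(u, w) ::ₘ rest⟩
  | deleteParallel (G : MGraph V) (e : Sym2 V) :
      ¬ e.IsDiag → 2 ≤ G.edges.count e →
      Step G ⟨G.verts, G.edges.erase e⟩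
  | deleteLoop (G : MGraph V) (v : V) :
      s(v, v) ∈ G.edges →
      Step G ⟨G.verts, G.edges.erase s(v, v)⟩

/-- The same operations but without loop deletion (GSP reduction). -/
inductive StepGSP : MGraph V → MGraph V → Prop
  | deleteLeaf (G : MGraph V) (v : V) (e : Sym2 V) :
      2 < G.verts.card → v ∈ G.verts → G.degree v = 1 → e ∈ G.edges → v ∈ e →
      StepGSP G ⟨G.verts.erase v, G.edges.erase e⟩
  | suppress (G : MGraph V) (v u w : V) (rest : Multiset (Sym2 V)) :
      2 < G.verts.card → v ∈ G.verts → G.degree v = 2 → u ≠ v → w ≠ v →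
      G.edges = s(u, v) ::ₘ s(v, w) ::ₘ rest →
      StepGSP G ⟨G.verts.erase v, s(u, w) ::ₘ rest⟩
  | deleteParallel (G : MGraph V) (e : Sym2 V) :
      ¬ e.IsDiag → 2 ≤ G.edges.count e →
      StepGSP G ⟨G.verts, G.edges.erase e⟩

/-- Only series (suppression) and parallel (parallel-edge deletion) reductions. -/
inductive StepSP : MGraph V → MGraph V → Prop
  | suppress (G : MGraph V) (v u w : V) (rest : Multiset (Sym2 V)) :
      2 < G.verts.card → v ∈ G.verts → G.degree v = 2 → u ≠ v → w ≠ v →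
      G.edges = s(u, v) ::ₘ s(v, w) ::ₘ rest →
      StepSP G ⟨G.verts.erase v, s(u, w) ::ₘ rest⟩
  | deleteParallel (G : MGraph V) (e : Sym2 V) :
      ¬ e.IsDiag → 2 ≤ G.edges.count e →
      StepSP G ⟨G.verts, G.edges.erase e⟩

/-- Being the graph `K2`: two vertices joined by a single edge. -/
def IsK2 (G : MGraph V) : Prop :=
  ∃ u v : V, u ≠ v ∧ G.verts = {u, v} ∧ G.edges = {s(u, v)}

/-- `G` has `K2` as a restricted topological subgraph. -/
def Reduces (G : MGraph V) : Prop :=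
  ∃ H : MGraph V, Relation.ReflTransGen Step G H ∧ IsK2 H

def ReducesGSP (G : MGraph V) : Prop :=
  ∃ H : MGraph V, Relation.ReflTransGen StepGSP G H ∧ IsK2 H

def ReducesSP (G : MGraph V) : Prop :=
  ∃ H : MGraph V, Relation.ReflTransGen StepSP G H ∧ IsK2 H

end MGraph

/-- The multigraph associated to a finite simple graph. -/
noncomputable def SimpleGraph.toMGraph {V : Type} [DecidableEq V] [Fintype V]
    (G : SimpleGraph V) : MGraph V :=
  ⟨Finset.univ, (Set.toFinite G.edgeSet).toFinset.val⟩

/-- A finite simple graph is edgebased if its multigraph reduces to `K2`. -/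
noncomputable def SimpleGraph.Edgebased {V : Type} [DecidableEq V] [Fintype V]
    (G : SimpleGraph V) : Prop :=
  G.toMGraph.Reduces


/-- A network is proper if removal of any cut edge or any cut vertex leaves
connected components each containing at least one leaf (degree-1 vertex). -/
def SimpleGraph.Proper {V : Type} (G : SimpleGraph V) : Prop :=
  (∀ e : Sym2 V, G.IsBridge e → ∀ w : V, ∃ u : V,
      (G.neighborSet u).ncard = 1 ∧ (G.deleteEdges {e}).Reachable w u) ∧
  (∀ v : V, ¬ (G.induce {u : V | u ≠ v}).Connected →
    ∀ w : ↥{u : V | u ≠ v}, ∃ x : ↥{u : V | u ≠ v},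
      (G.neighborSet x.1).ncard = 1 ∧ (G.induce {u : V | u ≠ v}).Reachable w x)


/-- The vertex set of the leaf-cut graph: all non-leaf vertices. -/
def SimpleGraph.LCUTverts {V : Type} (N : SimpleGraph V) : Set V :=
  {v : V | (N.neighborSet v).ncard ≠ 1}

/-- The leaf-cut graph: `N` with all leaves and their incident edges deleted. -/
def SimpleGraph.LCUT {V : Type} (N : SimpleGraph V) : SimpleGraph N.LCUTverts :=
  N.induce N.LCUTverts



namespace MGraph

variable {V : Type} [DecidableEq V]

lemma three_le_degree (G : MGraph V) {x : V} {S : Finset V}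
    (h : 3 ≤ (S.filter fun y => y ≠ x ∧ s(x, y) ∈ G.edges).card) : 3 ≤ G.degree x := by
  classical
  set F := S.filter fun y => y ≠ x ∧ s(x, y) ∈ G.edges with hF
  set f : Sym2 V → ℕ := fun e => if e = s(x, x) then 2 else if x ∈ e then 1 else 0 with hf
  set m := G.edges.filter (fun e => x ∈ e) with hm
  have hinj : Set.InjOn (fun y => s(x, y)) F := by
    intro a ha b hb hab
    simp only at hab
    rw [Sym2.congr_right] at hab
    exact hab
  have hsub : F.image (fun y => s(x, y)) ⊆ m.toFinset := by
    intro e he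
    simp only [Finset.mem_image] at he
    obtain ⟨z, hz, rfl⟩ := he
    rw [hF, Finset.mem_filter] at hz
    rw [Multiset.mem_toFinset, hm, Multiset.mem_filter]
    exact ⟨hz.2.2, Sym2.mem_mk_left x z⟩
  have h3 : 3 ≤ (F.image (fun y => s(x, y))).card := by
    rw [Finset.card_image_of_injOn hinj]; exact h
  have h4 : (F.image (fun y => s(x, y))).card ≤ m.toFinset.card :=
    Finset.card_le_card hsub
  have h5 : m.toFinset.card ≤ Multiset.card m := Multiset.toFinset_card_le m
  have h6 : Multiset.card m ≤ (m.map f).sum := by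
    have hone : ∀ n ∈ m.map f, 1 ≤ n := by
      intro n hn
      rw [Multiset.mem_map] at hn
      obtain ⟨e, he, rfl⟩ := hn
      rw [hm, Multiset.mem_filter] at he
      rw [hf]
      by_cases hd : e = s(x, x) <;> simp [hd, he.2]
    calc Multiset.card m = Multiset.card (m.map f) * 1 := by simp
    _ ≤ (m.map f).sum := by
        have := Multiset.card_nsmul_le_sum hone
        simpa using this
  have h7 : (m.map f).sum ≤ G.degree x := by
    unfold degree
    conv_rhs => rw [← Multiset.filter_add_not (fun e => x ∈ e) G.edges]
    rw [Multiset.map_add, Multiset.sum_add]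
    exact Nat.le_add_right _ _
  omega

def Bad (G : MGraph V) : Prop :=
  ∃ S : Finset V, S.Nonempty ∧ S ⊆ G.verts ∧
    ∀ x ∈ S, 3 ≤ (S.filter fun y => y ≠ x ∧ s(x, y) ∈ G.edges).card

lemma Step.bad {G H : MGraph V} (h : MGraph.Step G H) (hb : G.Bad) : H.Bad := by
  obtain ⟨S, hne, hsub, hbad⟩ := hb
  cases h with
  | deleteLeaf v e hcard hv hdeg he hve =>
    have hvS : v ∉ S := by
      intro hvS
      have := G.three_le_degree (hbad v hvS); omega
    refine ⟨S, hne, ?_, ?_⟩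
    · intro z hz; exact Finset.mem_erase.mpr ⟨fun h => hvS (h ▸ hz), hsub hz⟩
    · intro x hx
      refine le_trans (hbad x hx) (Finset.card_le_card ?_)
      intro y hy
      rw [Finset.mem_filter] at hy ⊢
      obtain ⟨hyS, hyx, hyedge⟩ := hy
      refine ⟨hyS, hyx, ?_⟩
      have hne' : s(x, y) ≠ e := by
        intro hcontra
        rw [← hcontra, Sym2.mem_iff] at hve
        rcases hve with h | h
        · exact hvS (h ▸ hx)
        · exact hvS (h ▸ hyS)
      exact (Multiset.mem_erase_of_ne hne').mpr hyedge
  | suppress v u w rest hcard hv hdeg hu hw hedges =>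
    have hvS : v ∉ S := by
      intro hvS
      have := G.three_le_degree (hbad v hvS); omega
    refine ⟨S, hne, ?_, ?_⟩
    · intro z hz; exact Finset.mem_erase.mpr ⟨fun h => hvS (h ▸ hz), hsub hz⟩
    · intro x hx
      refine le_trans (hbad x hx) (Finset.card_le_card ?_)
      intro y hy
      rw [Finset.mem_filter] at hy ⊢
      obtain ⟨hyS, hyx, hyedge⟩ := hy
      refine ⟨hyS, hyx, ?_⟩
      have hxv : x ≠ v := fun h => hvS (h ▸ hx)
      have hyv : y ≠ v := fun h => hvS (h ▸ hyS)
      have hnuv : s(x, y) ≠ s(u, v) := by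
        intro hc
        have : v ∈ s(x, y) := by rw [hc]; exact Sym2.mem_mk_right u v
        rw [Sym2.mem_iff] at this
        rcases this with h | h
        · exact hxv h.symm
        · exact hyv h.symm
      have hnvw : s(x, y) ≠ s(v, w) := by
        intro hc
        have : v ∈ s(x, y) := by rw [hc]; exact Sym2.mem_mk_left v w
        rw [Sym2.mem_iff] at this
        rcases this with h | h
        · exact hxv h.symm
        · exact hyv h.symm
      rw [hedges, Multiset.mem_cons, Multiset.mem_cons] at hyedge
      rcases hyedge with h | h | h
      · exact absurd h hnuv
      · exact absurd h hnvw
      · exact Multiset.mem_cons_of_mem h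
  | deleteParallel e hd hcount =>
    refine ⟨S, hne, hsub, ?_⟩
    intro x hx
    refine le_trans (hbad x hx) (Finset.card_le_card ?_)
    intro y hy
    rw [Finset.mem_filter] at hy ⊢
    obtain ⟨hyS, hyx, hyedge⟩ := hy
    refine ⟨hyS, hyx, ?_⟩
    by_cases hc : s(x, y) = e
    · subst hc
      rw [← Multiset.count_pos, Multiset.count_erase_self]
      omega
    · exact (Multiset.mem_erase_of_ne hc).mpr hyedge
  | deleteLoop v hloop =>
    refine ⟨S, hne, hsub, ?_⟩
    intro x hx
    refine le_trans (hbad x hx) (Finset.card_le_card ?_)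
    intro y hy
    rw [Finset.mem_filter] at hy ⊢
    obtain ⟨hyS, hyx, hyedge⟩ := hy
    refine ⟨hyS, hyx, ?_⟩
    have hc : s(x, y) ≠ s(v, v) := by
      intro hc
      rw [Sym2.eq_iff] at hc
      rcases hc with ⟨h1, h2⟩ | ⟨h1, h2⟩ <;> exact hyx (h2.trans h1.symm)
    exact (Multiset.mem_erase_of_ne hc).mpr hyedge

lemma IsK2.not_bad {G : MGraph V} (h : G.IsK2) : ¬ G.Bad := by
  obtain ⟨u, v, huv, hverts, hedges⟩ := h
  rintro ⟨S, ⟨x, hx⟩, hsub, hbad⟩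
  have h3 := hbad x hx
  have hfl : (S.filter fun y => y ≠ x ∧ s(x, y) ∈ G.edges).card ≤ S.card :=
    Finset.card_filter_le _ _
  have hS : S ⊆ {u, v} := hverts ▸ hsub
  have hSc : S.card ≤ 2 := by
    refine le_trans (Finset.card_le_card hS) ?_
    refine le_trans (Finset.card_insert_le _ _) ?_
    simp
  omega

lemma bad_trans {G H : MGraph V} (h : Relation.ReflTransGen MGraph.Step G H)
    (hb : G.Bad) : H.Bad := by
  induction h with
  | refl => exact hb
  | tail _ hstep ih => exact hstep.bad ih

lemma Reduces.not_bad {G : MGraph V} (h : G.Reduces) : ¬ G.Bad := by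
  obtain ⟨H, hsteps, hK2⟩ := h
  intro hb
  exact hK2.not_bad (bad_trans hsteps hb)

end MGraph

section WalkPart
open SimpleGraph


variable {W : Type} [DecidableEq W] {G : SimpleGraph W}

lemma interior_neighbors {x y v : W} (p : G.Walk x y)
    (hp : p.IsPath) (hv : v ∈ p.support) (hvx : v ≠ x) (hvy : v ≠ y) :
    ∃ u₁ u₂ : W, G.Adj v u₁ ∧ G.Adj v u₂ ∧ u₁ ≠ u₂ ∧ u₁ ≠ y ∧ u₂ ≠ x ∧
      (u₁ = x → u₂ = y → p.support = [x, v, y]) := by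
  set q := p.takeUntil v hv with hq
  set r := p.dropUntil v hv with hrr
  have hspec : q.append r = p := p.take_spec hv
  have hqp : q.IsPath := hp.takeUntil hv
  have hrp : r.IsPath := hp.dropUntil hv
  have hnodup : (q.support ++ r.support.tail).Nodup := by
    rw [← Walk.support_append, hspec]; exact hp.support_nodup
  have hdisj : List.Disjoint q.support r.support.tail :=
    by intro a ha hb; exact (List.nodup_append.mp hnodup).2.2 a ha a hb rfl
  obtain ⟨u₁, hadj₁, q₁, hq₁⟩ := Walk.exists_eq_cons_of_ne hvx q.reverse
  obtain ⟨u₂, hadj₂, r₂, hr₂⟩ := Walk.exists_eq_cons_of_ne hvy r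
  have hu₁q : u₁ ∈ q.support := by
    have h1 : u₁ ∈ q.reverse.support := by
      rw [hq₁, Walk.support_cons]
      exact List.mem_cons_of_mem _ q₁.start_mem_support
    rwa [Walk.support_reverse, List.mem_reverse] at h1
  have hrtail : r.support.tail = r₂.support := by rw [hr₂, Walk.support_cons, List.tail_cons]
  have hu₂r : u₂ ∈ r.support.tail := by rw [hrtail]; exact r₂.start_mem_support
  have hyr : y ∈ r.support.tail := by rw [hrtail]; exact r₂.end_mem_support
  have hxq : x ∈ q.support := q.start_mem_support
  refine ⟨u₁, u₂, hadj₁, hadj₂, ?_, ?_, ?_, ?_⟩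
  · intro h; exact hdisj hu₁q (h ▸ hu₂r)
  · intro h; exact hdisj hu₁q (h ▸ hyr)
  · intro h; exact hdisj (h ▸ hxq) hu₂r
  · intro h1 h2
    have hq₁p : q₁.IsPath := by
      have := hqp.reverse
      rw [hq₁] at this
      exact this.of_cons
    have hr₂p : r₂.IsPath := by rw [hr₂] at hrp; exact hrp.of_cons
    subst h1; subst h2
    have hq₁nil : q₁ = Walk.nil := Walk.isPath_iff_eq_nil.mp hq₁p
    have hr₂nil : r₂ = Walk.nil := Walk.isPath_iff_eq_nil.mp hr₂p
    have hqs : q.support = [u₁, v] := by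
      have h0 : q.reverse.support = [v, u₁] := by rw [hq₁, hq₁nil]; simp
      have h2 := congrArg List.reverse h0
      simpa [Walk.support_reverse] using h2
    have hrs : r.support = [v, u₂] := by rw [hr₂, hr₂nil]; simp
    rw [← hspec, Walk.support_append, hqs, hrs]
    rfl

end WalkPart

open SimpleGraph in


lemma mindeg3 {W : Type} [Fintype W] [DecidableEq W] (G : SimpleGraph W)
    (h4 : 4 ≤ Fintype.card W)
    (hH : ∀ u v : W, u ≠ v → ∃ p : G.Walk u v, p.IsHamiltonian) (v : W) :
    3 ≤ (G.neighborSet v).ncard := by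
  by_contra hlt
  push_neg at hlt
  have hcard : 1 < (Finset.univ.erase v).card := by
    rw [Finset.card_erase_of_mem (Finset.mem_univ v), Finset.card_univ]; omega
  obtain ⟨x, hx, y, hy, hxy⟩ := Finset.one_lt_card.mp hcard
  have hvx : v ≠ x := fun h => (Finset.mem_erase.mp hx).1 h.symm
  have hvy : v ≠ y := fun h => (Finset.mem_erase.mp hy).1 h.symm
  obtain ⟨p, hp⟩ := hH x y hxy
  obtain ⟨u₁, u₂, h1, h2, h12, -, -, -⟩ :=
    interior_neighbors p hp.isPath (hp.mem_support v) hvx hvy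
  have hsub : ({u₁, u₂} : Set W) ⊆ G.neighborSet v := by
    rintro z (rfl | rfl)
    · exact h1
    · exact h2
  have h2le : 2 ≤ (G.neighborSet v).ncard := by
    rw [← Set.ncard_pair h12]
    exact Set.ncard_le_ncard hsub (Set.toFinite _)
  have hncard : (G.neighborSet v).ncard = 2 := by omega
  have heq : G.neighborSet v = {u₁, u₂} := by
    refine (Set.eq_of_subset_of_ncard_le hsub ?_ (Set.toFinite _)).symm
    rw [hncard, Set.ncard_pair h12]
  have hvu₁ : v ≠ u₁ := G.ne_of_adj h1
  have hvu₂ : v ≠ u₂ := G.ne_of_adj h2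
  obtain ⟨p', hp'⟩ := hH u₁ u₂ h12
  obtain ⟨a, b, ha, hb, hab, hay, hbx, hfin⟩ :=
    interior_neighbors p' hp'.isPath (hp'.mem_support v) hvu₁ hvu₂
  have haset : a ∈ ({u₁, u₂} : Set W) := heq ▸ ha
  have hbset : b ∈ ({u₁, u₂} : Set W) := heq ▸ hb
  have ha1 : a = u₁ := by rcases haset with h | h; exact h; exact absurd h hay
  have hb2 : b = u₂ := by rcases hbset with h | h; exact absurd h hbx; exact h
  have hsup := hfin ha1 hb2
  have hall : (Finset.univ : Finset W) ⊆ {u₁, v, u₂} := by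
    intro w _
    have := hp'.mem_support w
    rw [hsup] at this
    simpa using this
  have hle : Fintype.card W ≤ ({u₁, v, u₂} : Finset W).card :=
    Finset.card_le_card hall
  have h3 : ({u₁, v, u₂} : Finset W).card ≤ 3 := by
    refine le_trans (Finset.card_insert_le _ _) ?_
    have := Finset.card_insert_le v ({u₂} : Finset W)
    simp only [Finset.card_singleton] at this
    omega
  omega

theorem stmt17 {V : Type} [Fintype V] [DecidableEq V] (N : SimpleGraph V)
    (hconn : N.Connected)
    (hnodeg2 : ∀ v : V, (N.neighborSet v).ncard ≠ 2)
    (hleaves : 2 ≤ {v : V | (N.neighborSet v).ncard = 1}.ncard)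
    (hproper : N.Proper)
    (hedge : N.Edgebased)
    (hH : ∀ u v : N.LCUTverts, u ≠ v → ∃ p : N.LCUT.Walk u v, p.IsHamiltonian) :
    Nat.card N.LCUTverts < 4 := by



  classical
  by_contra hcon
  push_neg at hcon
  haveI : Fintype ↥N.LCUTverts := Fintype.ofFinite _
  have hcard4 : 4 ≤ Fintype.card ↥N.LCUTverts := by
    rwa [Nat.card_eq_fintype_card] at hcon
  have hmin := mindeg3 N.LCUT hcard4 hH
  have hfinL : N.LCUTverts.Finite := Set.toFinite _
  have hbad : N.toMGraph.Bad := by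
    refine ⟨hfinL.toFinset, ?_, ?_, ?_⟩
    · rw [← Finset.card_pos, ← Set.ncard_eq_toFinset_card _ hfinL]
      rw [Nat.card_eq_fintype_card] at hcon
      rw [Set.ncard_eq_toFinset_card']
      rw [Set.toFinset_card]
      omega
    · intro z _
      show z ∈ (SimpleGraph.toMGraph N).verts
      simp [SimpleGraph.toMGraph]
    · intro x hx
      rw [Set.Finite.mem_toFinset] at hx
      have h3 := hmin ⟨x, hx⟩
      have hfn : (N.LCUT.neighborSet ⟨x, hx⟩).Finite := Set.toFinite _
      rw [Set.ncard_eq_toFinset_card _ hfn] at h3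
      refine le_trans h3 (Finset.card_le_card_of_injOn Subtype.val ?_ ?_)
      · intro u hu
        rw [Finset.mem_coe, Set.Finite.mem_toFinset, SimpleGraph.mem_neighborSet] at hu
        have hadj : N.Adj x u.1 := hu
        rw [Finset.mem_coe, Finset.mem_filter, Set.Finite.mem_toFinset]
        refine ⟨u.2, (N.ne_of_adj hadj).symm, ?_⟩
        show s(x, u.1) ∈ (SimpleGraph.toMGraph N).edges
        simp only [SimpleGraph.toMGraph, Finset.mem_val, Set.Finite.mem_toFinset,
          SimpleGraph.mem_edgeSet]
        exact hadj
      · intro a _ b _ hab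
        exact Subtype.ext hab
  exact MGraph.Reduces.not_bad hedge hbad
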